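/- Let M be a positive integer, let σ² > 0, B > 0 and H₁,…,H_M > 0 be real numbers. For every vector of rates r₁,…,r_M ≥ 0 there exists a unique vector of powers p₁,…,p_M ≥ 0 such that for all m = 1,…,M, r_m = B · log₂(1 + (H_m · p_m)/(H_m · ∑_{l=m+1}^{M} p_l + σ²)); it is given by p_m = a_m − a_{m+1}, where a_m = ∑_{l=m}^{M} (σ²/H_l)(2^{r_l/B} − 1) · 2^{(∑_{s=m}^{l−1} r_s)/B} and a_{M+1} = 0. Moreover, for this p the total power satisfies ∑_{m=1}^{M} p_m = ∑_{m=1}^{M} (σ²/H_m − σ²/H_{m+1}) · 2^{(∑_{s=1}^{m} r_s)/B} − σ²/H₁ (with σ²/H_{M+1} := 0), and p_m = 0 if and only if r_m = 0. -/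

import Mathlib

open Finset

/-- Cumulative power `a m = ∑_{l=m}^M (σ²/H l)(2^{r l/B} - 1) 2^{(∑_{s=m}^{l-1} r s)/B}`
of users `m,…,M` in the NOMA power-rate conversion (note `cumPow M σ2 B H r (M+1) = 0`). -/
noncomputable def cumPow (M : ℕ) (σ2 B : ℝ) (H r : ℕ → ℝ) (m : ℕ) : ℝ :=
  ∑ l ∈ Finset.Icc m M,
    (σ2 / H l) * ((2 : ℝ) ^ (r l / B) - 1)
      * (2 : ℝ) ^ ((∑ s ∈ Finset.Icc m (l - 1), r s) / B)

lemma cumPow_top (M : ℕ) (σ2 B : ℝ) (H r : ℕ → ℝ) : cumPow M σ2 B H r (M+1) = 0 := by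
  unfold cumPow
  rw [Finset.Icc_eq_empty (by omega), Finset.sum_empty]

lemma cumPow_rec (M : ℕ) (σ2 B : ℝ) (hB : 0 < B) (H r : ℕ → ℝ)
    (m : ℕ) (hm : 1 ≤ m) (hmM : m ≤ M) :
    cumPow M σ2 B H r m
      = (σ2 / H m) * ((2:ℝ) ^ (r m / B) - 1)
        + (2:ℝ) ^ (r m / B) * cumPow M σ2 B H r (m+1) := by
  unfold cumPow
  have hsplit : Finset.Icc m M = insert m (Finset.Icc (m+1) M) := by
    ext x; simp [Finset.mem_Icc, Finset.mem_insert]; omega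
  rw [hsplit, Finset.sum_insert (by simp [Finset.mem_Icc])]
  have h1 : Finset.Icc m (m - 1) = (∅ : Finset ℕ) := Finset.Icc_eq_empty (by omega)
  rw [h1, Finset.sum_empty, zero_div, Real.rpow_zero, mul_one, Finset.mul_sum]
  congr 1
  apply Finset.sum_congr rfl
  intro l hl
  simp only [Finset.mem_Icc] at hl
  have h2 : Finset.Icc m (l - 1) = insert m (Finset.Icc (m+1) (l - 1)) := by
    ext x; simp [Finset.mem_Icc, Finset.mem_insert]; omega
  rw [h2, Finset.sum_insert (by simp [Finset.mem_Icc])]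
  rw [add_div, Real.rpow_add two_pos]
  ring

lemma one_le_two_rpow {B x : ℝ} (hB : 0 < B) (hx : 0 ≤ x) : (1:ℝ) ≤ (2:ℝ) ^ (x / B) :=
  Real.one_le_rpow one_le_two (by positivity)

lemma cumPow_nonneg (M : ℕ) (σ2 B : ℝ) (hσ : 0 < σ2) (hB : 0 < B)
    (H r : ℕ → ℝ) (hH : ∀ m ∈ Finset.Icc 1 M, 0 < H m)
    (hr : ∀ m ∈ Finset.Icc 1 M, 0 ≤ r m) (m : ℕ) (hm : 1 ≤ m) :
    0 ≤ cumPow M σ2 B H r m := by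
  apply Finset.sum_nonneg
  intro l hl
  simp only [Finset.mem_Icc] at hl
  have hHl := hH l (by simp [Finset.mem_Icc]; omega)
  have hrl := hr l (by simp [Finset.mem_Icc]; omega)
  have h1 : (1:ℝ) ≤ (2:ℝ) ^ (r l / B) := one_le_two_rpow hB hrl
  have h2 : (0:ℝ) ≤ (2:ℝ) ^ ((∑ s ∈ Finset.Icc m (l - 1), r s) / B) := by positivity
  have h3 : (0:ℝ) ≤ σ2 / H l := by positivity
  have := mul_nonneg (mul_nonneg h3 (by linarith : (0:ℝ) ≤ (2:ℝ) ^ (r l / B) - 1)) h2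
  linarith

lemma sum_p_telescope (M : ℕ) (σ2 B : ℝ) (H r : ℕ → ℝ) (p : ℕ → ℝ)
    (hpdef : ∀ m, p m = cumPow M σ2 B H r m - cumPow M σ2 B H r (m + 1)) :
    ∀ k m, m + k = M + 1 → (∑ l ∈ Finset.Icc m M, p l) = cumPow M σ2 B H r m := by
  intro k
  induction k with
  | zero =>
    intro m hm
    rw [Finset.Icc_eq_empty (by omega), Finset.sum_empty]
    have : m = M + 1 := by omega
    rw [this, cumPow_top]
  | succ n ih =>
    intro m hm
    have hsplit : Finset.Icc m M = insert m (Finset.Icc (m+1) M) := by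
      ext x; simp [Finset.mem_Icc, Finset.mem_insert]; omega
    rw [hsplit, Finset.sum_insert (by simp [Finset.mem_Icc]), ih (m+1) (by omega), hpdef m]
    ring

lemma cumPow_one (M : ℕ) (hM : 0 < M) (σ2 B : ℝ) (H r : ℕ → ℝ) :
    cumPow M σ2 B H r 1
      = (∑ m ∈ Finset.Icc 1 M,
          (σ2 / H m - if m < M then σ2 / H (m + 1) else 0)
            * (2 : ℝ) ^ ((∑ s ∈ Finset.Icc 1 m, r s) / B))
        - σ2 / H 1 := by
  set c : ℕ → ℝ := fun m => (2:ℝ) ^ ((∑ s ∈ Finset.Icc 1 m, r s) / B) with hc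
  have hc0 : c 0 = 1 := by
    simp only [hc]
    rw [Finset.Icc_eq_empty (by omega), Finset.sum_empty, zero_div, Real.rpow_zero]
  have hcstep : ∀ l : ℕ, 1 ≤ l → c l = (2:ℝ) ^ (r l / B) * c (l - 1) := by
    intro l hl
    simp only [hc]
    have hsplit : Finset.Icc 1 l = insert l (Finset.Icc 1 (l - 1)) := by
      ext x; simp [Finset.mem_Icc, Finset.mem_insert]; omega
    rw [hsplit, Finset.sum_insert (by simp [Finset.mem_Icc]; omega), add_div,
      Real.rpow_add two_pos]
  have h1 : cumPow M σ2 B H r 1 = ∑ l ∈ Finset.Icc 1 M, (σ2 / H l) * (c l - c (l - 1)) := by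
    unfold cumPow
    apply Finset.sum_congr rfl
    intro l hl
    simp only [Finset.mem_Icc] at hl
    rw [hcstep l hl.1]
    simp only [hc]
    ring
  rw [h1]
  have hIcc : Finset.Icc 1 M = Finset.Ico 1 (M + 1) := by rw [Finset.Ico_add_one_right_eq_Icc]
  rw [hIcc, Finset.sum_Ico_eq_sum_range, Finset.sum_Ico_eq_sum_range]
  simp only [Nat.add_sub_cancel, Nat.add_sub_cancel_left]
  obtain ⟨K, rfl⟩ : ∃ K, M = K + 1 := ⟨M - 1, by omega⟩
  simp only [mul_sub]
  rw [Finset.sum_sub_distrib]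
  have e2 : ∀ i ∈ Finset.range (K + 1),
      (σ2 / H (1 + i) - if 1 + i < K + 1 then σ2 / H (1 + i + 1) else 0)
          * (2 : ℝ) ^ ((∑ s ∈ Finset.Icc 1 (1 + i), r s) / B)
        = (σ2 / H (1 + i)) * c (1 + i)
          - (if 1 + i < K + 1 then σ2 / H (1 + i + 1) else 0) * c (1 + i) := by
    intro i _; simp only [hc]; ring
  rw [Finset.sum_congr rfl e2, Finset.sum_sub_distrib]
  have key : ∑ i ∈ Finset.range (K + 1), (σ2 / H (1 + i)) * c i
      = (∑ i ∈ Finset.range (K + 1),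
          (if 1 + i < K + 1 then σ2 / H (1 + i + 1) else 0) * c (1 + i)) + σ2 / H 1 := by
    rw [Finset.sum_range_succ', Finset.sum_range_succ]
    have hlast : (if 1 + K < K + 1 then σ2 / H (1 + K + 1) else 0) * c (1 + K) = 0 := by
      rw [if_neg (by omega), zero_mul]
    rw [hlast, add_zero, hc0, mul_one]
    congr 1
    rw [add_zero]
    apply Finset.sum_congr rfl
    intro i hi
    simp only [Finset.mem_range] at hi
    rw [if_pos (by omega), show 1 + (i + 1) = 1 + i + 1 from by omega,
      show i + 1 = 1 + i from by omega]
  rw [key]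
  ring

/-- Theorem 1 of the paper on one subcarrier: for every nonnegative rate vector `r`
there is a unique nonnegative power vector `p` achieving the NOMA rates
`r m = B log₂(1 + H_m p_m / (H_m ∑_{l=m+1}^M p_l + σ²))`; it is
`p m = a m - a (m+1)` with `a` the cumulative powers, the total power has the
closed form `∑_m (σ²/H m - σ²/H (m+1)) 2^{(∑_{s=1}^m r s)/B} - σ²/H 1`
(with `σ²/H (M+1) := 0`), and `p m = 0 ↔ r m = 0`. -/
theorem stmt_5 (M : ℕ) (hM : 0 < M) (σ2 B : ℝ) (hσ : 0 < σ2) (hB : 0 < B)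
    (H : ℕ → ℝ) (hH : ∀ m ∈ Finset.Icc 1 M, 0 < H m)
    (r : ℕ → ℝ) (hr : ∀ m ∈ Finset.Icc 1 M, 0 ≤ r m)
    (p : ℕ → ℝ)
    (hpdef : ∀ m, p m = cumPow M σ2 B H r m - cumPow M σ2 B H r (m + 1)) :
    (∀ m ∈ Finset.Icc 1 M, 0 ≤ p m) ∧
    (∀ m ∈ Finset.Icc 1 M,
      r m = B * Real.logb 2
        (1 + H m * p m / (H m * (∑ l ∈ Finset.Icc (m + 1) M, p l) + σ2))) ∧
    (∀ q : ℕ → ℝ, (∀ m ∈ Finset.Icc 1 M, 0 ≤ q m) →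
      (∀ m ∈ Finset.Icc 1 M,
        r m = B * Real.logb 2
          (1 + H m * q m / (H m * (∑ l ∈ Finset.Icc (m + 1) M, q l) + σ2))) →
      ∀ m ∈ Finset.Icc 1 M, q m = p m) ∧
    (∑ m ∈ Finset.Icc 1 M, p m
      = (∑ m ∈ Finset.Icc 1 M,
          (σ2 / H m - if m < M then σ2 / H (m + 1) else 0)
            * (2 : ℝ) ^ ((∑ s ∈ Finset.Icc 1 m, r s) / B))
        - σ2 / H 1) ∧
    (∀ m ∈ Finset.Icc 1 M, (p m = 0 ↔ r m = 0)) := by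
  set a : ℕ → ℝ := cumPow M σ2 B H r with ha
  -- basic facts used repeatedly
  have hann : ∀ m : ℕ, 1 ≤ m → 0 ≤ a m := fun m hm =>
    cumPow_nonneg M σ2 B hσ hB H r hH hr m hm
  have hp : ∀ m ∈ Finset.Icc 1 M,
      p m = ((2:ℝ) ^ (r m / B) - 1) * (σ2 / H m + a (m + 1)) := by
    intro m hm
    simp only [Finset.mem_Icc] at hm
    have hrec : a m = (σ2 / H m) * ((2:ℝ) ^ (r m / B) - 1)
        + (2:ℝ) ^ (r m / B) * a (m + 1) := cumPow_rec M σ2 B hB H r m hm.1 hm.2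
    rw [hpdef m, hrec]
    ring
  have hsum : ∀ m : ℕ, m ≤ M + 1 →
      (∑ l ∈ Finset.Icc m M, p l) = a m := by
    intro m hm
    exact sum_p_telescope M σ2 B H r p hpdef (M + 1 - m) m (by omega)
  have hfac : ∀ m ∈ Finset.Icc 1 M, 0 < σ2 / H m + a (m + 1) := by
    intro m hm
    have hHm := hH m hm
    have := hann (m + 1) (by omega)
    have : 0 < σ2 / H m := by positivity
    linarith [hann (m + 1) (by omega)]
  have hpos : ∀ m ∈ Finset.Icc 1 M, 0 ≤ p m := by
    intro m hm
    rw [hp m hm]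
    have h1 : (1:ℝ) ≤ (2:ℝ) ^ (r m / B) := one_le_two_rpow hB (hr m hm)
    exact mul_nonneg (by linarith) (hfac m hm).le
  refine ⟨hpos, ?_, ?_, ?_, ?_⟩
  · -- rate equations
    intro m hm
    have hm' := hm
    simp only [Finset.mem_Icc] at hm'
    have hHm := hH m hm
    have hQ : (∑ l ∈ Finset.Icc (m + 1) M, p l) = a (m + 1) := hsum (m + 1) (by omega)
    have hD : 0 < H m * a (m + 1) + σ2 := by
      have := mul_nonneg hHm.le (hann (m + 1) (by omega))
      linarith
    rw [hQ]
    have hratio : H m * p m / (H m * a (m + 1) + σ2) = (2:ℝ) ^ (r m / B) - 1 := by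
      rw [hp m hm, div_eq_iff hD.ne']
      have hc : H m * (σ2 / H m) = σ2 := by field_simp
      linear_combination ((2:ℝ) ^ (r m / B) - 1) * hc
    rw [hratio, show (1:ℝ) + ((2:ℝ) ^ (r m / B) - 1) = (2:ℝ) ^ (r m / B) from by ring,
      Real.logb_rpow two_pos (by norm_num)]
    rw [eq_comm, mul_comm, div_mul_cancel₀ _ hB.ne']
  · -- uniqueness
    intro q hq0 hqr
    have hqstep : ∀ m ∈ Finset.Icc 1 M,
        q m = ((2:ℝ) ^ (r m / B) - 1)
          * (σ2 / H m + ∑ l ∈ Finset.Icc (m + 1) M, q l) := by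
      intro m hm
      have hm' := hm
      simp only [Finset.mem_Icc] at hm'
      have hHm := hH m hm
      have hQnn : 0 ≤ ∑ l ∈ Finset.Icc (m + 1) M, q l := by
        apply Finset.sum_nonneg
        intro l hl
        simp only [Finset.mem_Icc] at hl
        exact hq0 l (by simp [Finset.mem_Icc]; omega)
      set Q := ∑ l ∈ Finset.Icc (m + 1) M, q l with hQdef
      have hqm := hq0 m hm
      have hD : 0 < H m * Q + σ2 := by
        have := mul_nonneg hHm.le hQnn
        linarith
      have hxnn : 0 ≤ H m * q m / (H m * Q + σ2) := by positivity
      have hlogb : Real.logb 2 (1 + H m * q m / (H m * Q + σ2)) = r m / B := by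
        have := hqr m hm
        rw [← hQdef] at this
        field_simp at this ⊢
        linarith
      have hpow : (2:ℝ) ^ (r m / B) = 1 + H m * q m / (H m * Q + σ2) := by
        rw [← hlogb, Real.rpow_logb two_pos (by norm_num) (by linarith)]
      have hkey : H m * q m = ((2:ℝ) ^ (r m / B) - 1) * (H m * Q + σ2) := by
        have h2 : H m * q m / (H m * Q + σ2) = (2:ℝ) ^ (r m / B) - 1 := by
          rw [hpow]; ring
        rw [← h2, div_mul_cancel₀ _ hD.ne']
      apply mul_left_cancel₀ hHm.ne'
      rw [hkey]
      have hc : H m * (σ2 / H m) = σ2 := by field_simp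
      linear_combination (1 - (2:ℝ) ^ (r m / B)) * hc
    have hqa : ∀ k m, m + k = M + 1 → 1 ≤ m →
        (∑ l ∈ Finset.Icc m M, q l) = a m := by
      intro k
      induction k with
      | zero =>
        intro m hmk _
        rw [Finset.Icc_eq_empty (by omega), Finset.sum_empty]
        have : m = M + 1 := by omega
        rw [this, ha, cumPow_top]
      | succ n ih =>
        intro m hmk hm1
        have hmM : m ≤ M := by omega
        have hsplit : Finset.Icc m M = insert m (Finset.Icc (m+1) M) := by
          ext x; simp [Finset.mem_Icc, Finset.mem_insert]; omega
        rw [hsplit, Finset.sum_insert (by simp [Finset.mem_Icc]),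
          ih (m + 1) (by omega) (by omega),
          hqstep m (by simp [Finset.mem_Icc]; omega),
          ih (m + 1) (by omega) (by omega)]
        have hrec : a m = (σ2 / H m) * ((2:ℝ) ^ (r m / B) - 1)
            + (2:ℝ) ^ (r m / B) * a (m + 1) := cumPow_rec M σ2 B hB H r m hm1 hmM
        rw [hrec]
        ring
    intro m hm
    have hm' := hm
    simp only [Finset.mem_Icc] at hm'
    have hsplit : Finset.Icc m M = insert m (Finset.Icc (m+1) M) := by
      ext x; simp [Finset.mem_Icc, Finset.mem_insert]; omega
    have h1 : q m + (∑ l ∈ Finset.Icc (m+1) M, q l) = a m := by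
      rw [← Finset.sum_insert (by simp [Finset.mem_Icc] : m ∉ Finset.Icc (m+1) M),
        ← hsplit]
      exact hqa (M + 1 - m) m (by omega) hm'.1
    have h2 : (∑ l ∈ Finset.Icc (m+1) M, q l) = a (m + 1) :=
      hqa (M - m) (m + 1) (by omega) (by omega)
    rw [hpdef m]
    rw [h2] at h1
    linarith
  · -- closed form for total power
    rw [hsum 1 (by omega)]
    exact cumPow_one M hM σ2 B H r
  · -- support
    intro m hm
    rw [hp m hm]
    have hfm := hfac m hm
    constructor
    · intro h0
      rcases mul_eq_zero.mp h0 with h | h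
      · have hpow : (2:ℝ) ^ (r m / B) = 1 := by linarith
        have hlb : Real.logb 2 ((2:ℝ) ^ (r m / B)) = r m / B :=
          Real.logb_rpow two_pos (by norm_num)
        rw [hpow, Real.logb_one] at hlb
        rcases div_eq_zero_iff.mp hlb.symm with h' | h'
        · exact h'
        · exact absurd h' hB.ne'
      · linarith
    · intro h0
      rw [h0, zero_div, Real.rpow_zero]
      ring
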